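/- Under the preconditioner setup: λ_max( P̂^{-1/2} (A + μI) P̂^{-1/2} ) ≤ λ̂_k + μ + ‖E‖₂ + ‖ℰ‖₂. -/

import Mathlib

open Matrix

/-- The spectral norm (largest singular value) of a real matrix,
as the `ℓ²→ℓ²` operator norm. -/
noncomputable def matSpectralNorm {m n : ℕ} (M : Matrix (Fin m) (Fin n) ℝ) : ℝ :=
  ‖LinearMap.toContinuousLinearMap (Matrix.toEuclideanLin M)‖

/-- The square root of a positive semidefinite matrix, as defined in the older
Mathlib (`Matrix.PosSemidef.sqrt`, since removed). -/
noncomputable def Matrix.PosSemidef.sqrt {n : Type*} [Fintype n] [DecidableEq n]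
    {𝕜 : Type*} [RCLike 𝕜] [PartialOrder 𝕜] {A : Matrix n n 𝕜} (hA : A.PosSemidef) : Matrix n n 𝕜 :=
  hA.1.eigenvectorUnitary.1 * diagonal ((↑) ∘ (√·) ∘ hA.1.eigenvalues) *
    (star hA.1.eigenvectorUnitary : Matrix n n 𝕜)

/-- The largest eigenvalue of a real symmetric matrix, as the supremum of the
Rayleigh quotient over the unit sphere. -/
noncomputable def lmax {n : ℕ} (M : Matrix (Fin n) (Fin n) ℝ) : ℝ :=
  ⨆ x : Metric.sphere (0 : EuclideanSpace ℝ (Fin n)) 1,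
    (inner ℝ (x : EuclideanSpace ℝ (Fin n))
      (Matrix.toEuclideanLin M (x : EuclideanSpace ℝ (Fin n))) : ℝ)

/-- The smallest eigenvalue of a real symmetric matrix, as the infimum of the
Rayleigh quotient over the unit sphere. -/
noncomputable def lmin {n : ℕ} (M : Matrix (Fin n) (Fin n) ℝ) : ℝ :=
  ⨅ x : Metric.sphere (0 : EuclideanSpace ℝ (Fin n)) 1,
    (inner ℝ (x : EuclideanSpace ℝ (Fin n))
      (Matrix.toEuclideanLin M (x : EuclideanSpace ℝ (Fin n))) : ℝ)

lemma Matrix.PosSemidef.sqrt_mul_self {n : ℕ} {P : Matrix (Fin n) (Fin n) ℝ}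
    (hP : P.PosSemidef) : hP.sqrt * hP.sqrt = P := by
  have hV : (star hP.1.eigenvectorUnitary : Matrix (Fin n) (Fin n) ℝ) *
      (hP.1.eigenvectorUnitary : Matrix (Fin n) (Fin n) ℝ) = 1 :=
    Unitary.coe_star_mul_self _
  conv_rhs => rw [hP.1.spectral_theorem, Unitary.conjStarAlgAut_apply]
  unfold Matrix.PosSemidef.sqrt
  simp only [← Matrix.mul_assoc]
  rw [Matrix.mul_assoc _ _ (hP.1.eigenvectorUnitary : Matrix (Fin n) (Fin n) ℝ), hV,
    Matrix.mul_one, Matrix.mul_assoc (hP.1.eigenvectorUnitary : Matrix (Fin n) (Fin n) ℝ),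
    diagonal_mul_diagonal]
  congr 3
  funext i
  simp [Real.mul_self_sqrt (hP.eigenvalues_nonneg i)]

lemma Matrix.PosSemidef.posSemidef_sqrt {n : ℕ} {P : Matrix (Fin n) (Fin n) ℝ}
    (hP : P.PosSemidef) : hP.sqrt.PosSemidef := by
  unfold Matrix.PosSemidef.sqrt
  have hD : (diagonal ((↑) ∘ (√·) ∘ hP.1.eigenvalues) : Matrix (Fin n) (Fin n) ℝ).PosSemidef := by
    rw [Matrix.posSemidef_diagonal_iff]
    intro i
    simp [Real.sqrt_nonneg]
  have := hD.mul_mul_conjTranspose_same (hP.1.eigenvectorUnitary : Matrix (Fin n) (Fin n) ℝ)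
  rwa [← star_eq_conjTranspose] at this

lemma inner_toEuclideanLin' {n : ℕ} (M : Matrix (Fin n) (Fin n) ℝ)
    (x : EuclideanSpace ℝ (Fin n)) :
    (inner ℝ x (Matrix.toEuclideanLin M x) : ℝ)
      = star x.ofLp ⬝ᵥ (M *ᵥ x.ofLp) := by
  simp [toEuclideanLin_apply, PiLp.inner_apply, dotProduct, mul_comm]

lemma psd_inner_nonneg {n : ℕ} {M : Matrix (Fin n) (Fin n) ℝ} (hM : M.PosSemidef)
    (x : EuclideanSpace ℝ (Fin n)) :
    0 ≤ (inner ℝ x (Matrix.toEuclideanLin M x) : ℝ) := by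
  rw [inner_toEuclideanLin']
  simpa using hM.dotProduct_mulVec_nonneg x.ofLp

lemma toEuclideanLin_mul_apply' {n : ℕ} (A B : Matrix (Fin n) (Fin n) ℝ)
    (x : EuclideanSpace ℝ (Fin n)) :
    Matrix.toEuclideanLin (A * B) x = Matrix.toEuclideanLin A (Matrix.toEuclideanLin B x) := by
  simp [toEuclideanLin_apply, mulVec_mulVec]

lemma herm_symm' {n : ℕ} {S : Matrix (Fin n) (Fin n) ℝ} (hS : S.IsHermitian)
    (x y : EuclideanSpace ℝ (Fin n)) :
    (inner ℝ (Matrix.toEuclideanLin S x) y : ℝ) = inner ℝ x (Matrix.toEuclideanLin S y) :=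
  (Matrix.isHermitian_iff_isSymmetric.1 hS) x y

lemma psd_smul' {n : ℕ} {M : Matrix (Fin n) (Fin n) ℝ} (hM : M.PosSemidef)
    {c : ℝ} (hc : 0 ≤ c) : (c • M).PosSemidef := by
  exact hM.smul hc

/-- Preconditioner setup: `n > k ≥ 1`, `A` real symmetric with `A + μI` positive
definite (`μ ≥ 0`), `Û` with orthonormal columns (`ÛᵀÛ = I`),
`Θ̂ = diag(λ̂_1,…,λ̂_k)` with `λ̂_1 ≥ … ≥ λ̂_k > 0`, `Â_N = Û Θ̂ Ûᵀ`,
`A = Â_N + E + ℰ` with `E, ℰ` symmetric and `E` positive semidefinite, and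
`P̂⁻¹ = I − ÛÛᵀ + (λ̂_k + μ) Û (Θ̂ + μI)⁻¹ Ûᵀ`, which is symmetric positive definite;
`P̂^{-1/2}` is its positive semidefinite square root.
Then `λ_max(P̂^{-1/2}(A + μI)P̂^{-1/2}) ≤ λ̂_k + μ + ‖E‖₂ + ‖ℰ‖₂`. -/
theorem stmt12 {n k : ℕ} (hk : 1 ≤ k) (hkn : k < n)
    (A : Matrix (Fin n) (Fin n) ℝ) (hA : A.IsHermitian)
    (μ : ℝ) (hμ : 0 ≤ μ) (hAμ : (A + μ • 1).PosDef)
    (U : Matrix (Fin n) (Fin k) ℝ) (hU : Uᵀ * U = 1)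
    (lamh : Fin k → ℝ) (hlamh : Antitone lamh) (hlamhk : 0 < lamh ⟨k - 1, by omega⟩)
    (E Err : Matrix (Fin n) (Fin n) ℝ) (hE : E.IsHermitian) (hErr : Err.IsHermitian)
    (hEpsd : E.PosSemidef)
    (hsum : A = U * Matrix.diagonal lamh * Uᵀ + E + Err)
    (hPinvPD : ((1 : Matrix (Fin n) (Fin n) ℝ) - U * Uᵀ +
      (lamh ⟨k - 1, by omega⟩ + μ) • (U * (Matrix.diagonal lamh + μ • 1)⁻¹ * Uᵀ)).PosDef)
     :
    let S := hPinvPD.posSemidef.sqrt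
    let M := S * (A + μ • 1) * S
    lmax M ≤ lamh ⟨k - 1, by omega⟩ + μ + matSpectralNorm E + matSpectralNorm Err := by
  intro S M
  set lamk : ℝ := lamh ⟨k - 1, by omega⟩ with hlamk
  set c : ℝ := lamk + μ with hc
  have hc0 : 0 < c := by positivity
  -- conjTranspose facts over ℝ
  have hUT : Uᴴ = Uᵀ := conjTranspose_eq_transpose_of_trivial U
  -- diagonal d
  set d : Fin k → ℝ := fun i => lamh i + μ with hd
  have hdpos : ∀ i, 0 < d i := by
    intro i
    have : lamk ≤ lamh i := hlamh (by rw [Fin.le_def]; exact Nat.le_pred_of_lt i.2)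
    simp only [hd]
    linarith
  have hcd : ∀ i, c ≤ d i := by
    intro i
    have : lamk ≤ lamh i := hlamh (by rw [Fin.le_def]; exact Nat.le_pred_of_lt i.2)
    simp only [hd, hc]
    linarith
  have hDdiag : Matrix.diagonal lamh + μ • (1 : Matrix (Fin k) (Fin k) ℝ)
      = Matrix.diagonal d := by
    ext i j
    rcases eq_or_ne i j with h | h
    · subst h; simp [hd]
    · simp [Matrix.diagonal_apply_ne _ h, Matrix.one_apply_ne h]
  have hDinv : (Matrix.diagonal d)⁻¹ = Matrix.diagonal (fun i => (d i)⁻¹) := by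
    apply Matrix.inv_eq_right_inv
    rw [Matrix.diagonal_mul_diagonal]
    convert Matrix.diagonal_one using 2
    funext i
    exact mul_inv_cancel₀ (hdpos i).ne'
  set Pinv : Matrix (Fin n) (Fin n) ℝ := 1 - U * Uᵀ +
      c • (U * (Matrix.diagonal lamh + μ • 1)⁻¹ * Uᵀ) with hPinv
  have hSS : S * S = Pinv := hPinvPD.posSemidef.sqrt_mul_self
  have hSh : S.IsHermitian := hPinvPD.posSemidef.posSemidef_sqrt.1
  have hSpsd : S.PosSemidef := hPinvPD.posSemidef.posSemidef_sqrt
  -- S is invertible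
  have hSunit : IsUnit S.det := by
    have h1 : S.det * S.det = Pinv.det := by rw [← Matrix.det_mul, hSS]
    have h2 : 0 < Pinv.det := hPinvPD.det_pos
    have : S.det ≠ 0 := by
      intro h; rw [h, mul_zero] at h1; exact h2.ne' h1.symm
    exact this.isUnit
  -- the conjugation map
  have key : ∀ X Y : Matrix (Fin k) (Fin k) ℝ,
      (U * X * Uᵀ) * (U * Y * Uᵀ) = U * (X * Y) * Uᵀ := by
    intro X Y
    calc (U * X * Uᵀ) * (U * Y * Uᵀ) = U * X * (Uᵀ * U) * (Y * Uᵀ) := by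
          simp only [Matrix.mul_assoc]
        _ = U * (X * Y) * Uᵀ := by rw [hU]; simp only [Matrix.mul_one, Matrix.mul_assoc]
  -- Pinv in f-form
  have hPinv' : Pinv = 1 + U * (c • Matrix.diagonal (fun i => (d i)⁻¹) - 1) * Uᵀ := by
    rw [hPinv, hDdiag, hDinv]
    simp only [Matrix.mul_sub, Matrix.sub_mul, Matrix.mul_one, Matrix.mul_smul, Matrix.smul_mul]
    abel
  -- Q = Pinv⁻¹
  set Q : Matrix (Fin n) (Fin n) ℝ := 1 + U * (c⁻¹ • Matrix.diagonal d - 1) * Uᵀ with hQ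
  have hPQ : Pinv * Q = 1 := by
    rw [hPinv', hQ]
    set X : Matrix (Fin k) (Fin k) ℝ := c • Matrix.diagonal (fun i => (d i)⁻¹) - 1 with hX
    set Y : Matrix (Fin k) (Fin k) ℝ := c⁻¹ • Matrix.diagonal d - 1 with hY
    have hXY : X + Y + X * Y = 0 := by
      have hDD : Matrix.diagonal (fun i => (d i)⁻¹) * Matrix.diagonal d = 1 := by
        rw [Matrix.diagonal_mul_diagonal]
        convert Matrix.diagonal_one using 2
        funext i
        exact inv_mul_cancel₀ (hdpos i).ne'
      have h5 : ((c • Matrix.diagonal fun i => (d i)⁻¹ : Matrix (Fin k) (Fin k) ℝ))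
          * (c⁻¹ • Matrix.diagonal d) = 1 := by
        rw [Matrix.smul_mul, Matrix.mul_smul, smul_smul, mul_inv_cancel₀ hc0.ne',
          one_smul, hDD]
      rw [hX, hY, sub_mul, mul_sub, mul_sub, h5]
      simp only [Matrix.mul_one, Matrix.one_mul]
      abel
    have : (1 + U * X * Uᵀ) * (1 + U * Y * Uᵀ)
        = 1 + U * (X + Y + X * Y) * Uᵀ := by
      rw [Matrix.mul_add, Matrix.add_mul, Matrix.add_mul, key]
      simp only [Matrix.one_mul, Matrix.mul_one, Matrix.mul_add, Matrix.add_mul]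
      abel
    rw [this, hXY]
    simp
  have hQinv : Pinv⁻¹ = Q := Matrix.inv_eq_right_inv hPQ
  -- S * Q * S = 1
  have hSQS : S * Q * S = 1 := by
    rw [← hQinv, ← hSS, Matrix.mul_inv_rev]
    calc S * (S⁻¹ * S⁻¹) * S = (S * S⁻¹) * (S⁻¹ * S) := by simp only [Matrix.mul_assoc]
      _ = 1 := by rw [Matrix.mul_nonsing_inv _ hSunit, Matrix.nonsing_inv_mul _ hSunit, Matrix.one_mul]
  -- B and the key PSD fact
  set B : Matrix (Fin n) (Fin n) ℝ := U * Matrix.diagonal lamh * Uᵀ + μ • 1 with hB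
  have hcQB : c • Q - B = lamk • (1 - U * Uᵀ) := by
    rw [hQ, hB]
    have h1 : U * (c⁻¹ • Matrix.diagonal d - 1) * Uᵀ
        = c⁻¹ • (U * Matrix.diagonal d * Uᵀ) - U * Uᵀ := by
      simp only [Matrix.mul_sub, Matrix.sub_mul, Matrix.mul_one, Matrix.mul_smul,
        Matrix.smul_mul]
    have h2 : U * Matrix.diagonal d * Uᵀ
        = U * Matrix.diagonal lamh * Uᵀ + μ • (U * Uᵀ) := by
      rw [← hDdiag]
      simp only [Matrix.mul_add, Matrix.add_mul, Matrix.mul_smul, Matrix.smul_mul,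
        Matrix.mul_one]
    rw [h1, h2]
    have hcc : ∀ X : Matrix (Fin n) (Fin n) ℝ, c • (c⁻¹ • X) = X := by
      intro X; rw [smul_smul, mul_inv_cancel₀ hc0.ne', one_smul]
    rw [smul_add, smul_sub, hcc, hc]
    module
  have hJpsd : ((1 : Matrix (Fin n) (Fin n) ℝ) - U * Uᵀ).PosSemidef := by
    have hproj : ((1 : Matrix (Fin n) (Fin n) ℝ) - U * Uᵀ)
        = (1 - U * Uᵀ) * (1 - U * Uᵀ)ᴴ := by
      have hh : ((1 : Matrix (Fin n) (Fin n) ℝ) - U * Uᵀ)ᴴ = 1 - U * Uᵀ := by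
        rw [conjTranspose_sub, conjTranspose_one, conjTranspose_mul, hUT,
          conjTranspose_eq_transpose_of_trivial, transpose_transpose]
      rw [hh]
      rw [Matrix.mul_sub, Matrix.sub_mul, Matrix.sub_mul, Matrix.mul_one, Matrix.one_mul]
      have hJJ : (U * Uᵀ) * (U * Uᵀ) = U * Uᵀ := by
        have := key 1 1
        simpa using this
      rw [hJJ]
      simp only [Matrix.mul_one]
      abel
    rw [hproj]
    exact Matrix.posSemidef_self_mul_conjTranspose _
  -- Fact B : c•1 - S*B*S is PSD
  have hFactB : (c • (1 : Matrix (Fin n) (Fin n) ℝ) - S * B * S).PosSemidef := by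
    have h1 : c • (1 : Matrix (Fin n) (Fin n) ℝ) - S * B * S
        = S * (c • Q - B) * S := by
      rw [Matrix.mul_sub, Matrix.sub_mul, Matrix.mul_smul, Matrix.smul_mul, hSQS]
    rw [h1, hcQB]
    have := (psd_smul' hJpsd hlamhk.le).mul_mul_conjTranspose_same S
    rwa [hSh.eq] at this
  -- Fact A : 1 - Pinv is PSD
  have hFactA : ((1 : Matrix (Fin n) (Fin n) ℝ) - Pinv).PosSemidef := by
    have h1 : (1 : Matrix (Fin n) (Fin n) ℝ) - Pinv
        = U * Matrix.diagonal (fun i => 1 - c * (d i)⁻¹) * Uᵀ := by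
      rw [hPinv']
      have : Matrix.diagonal (fun i => 1 - c * (d i)⁻¹)
          = -(c • Matrix.diagonal (fun i => (d i)⁻¹) - 1) := by
        ext i j
        rcases eq_or_ne i j with h | h
        · subst h; simp
        · simp [Matrix.diagonal_apply_ne _ h, Matrix.one_apply_ne h]
      rw [this]
      simp only [Matrix.mul_neg, Matrix.neg_mul]
      abel
    rw [h1]
    have hdiagpsd : (Matrix.diagonal (fun i => 1 - c * (d i)⁻¹)).PosSemidef := by
      rw [Matrix.posSemidef_diagonal_iff]
      intro i
      have h2 : c * (d i)⁻¹ ≤ 1 := by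
        rw [mul_inv_le_iff₀ (hdpos i), one_mul]
        exact hcd i
      linarith
    have := hdiagpsd.mul_mul_conjTranspose_same U
    rwa [hUT] at this
  -- sup bound
  haveI hne : Nonempty (Metric.sphere (0 : EuclideanSpace ℝ (Fin n)) 1) := by
    refine ⟨⟨EuclideanSpace.single ⟨0, by omega⟩ (1 : ℝ), ?_⟩⟩
    simp [EuclideanSpace.norm_single]
  unfold lmax
  apply ciSup_le
  rintro ⟨x, hx⟩
  simp only [Metric.mem_sphere, dist_zero_right] at hx
  have hxx : (inner ℝ x x : ℝ) = 1 := by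
    rw [real_inner_self_eq_norm_mul_norm, hx, mul_one]
  -- decompose M
  have hMdec : M = S * B * S + S * E * S + S * Err * S := by
    have hABE : A + μ • 1 = B + E + Err := by rw [hsum, hB]; abel
    show S * (A + μ • 1) * S = _
    rw [hABE, Matrix.mul_add, Matrix.mul_add, Matrix.add_mul, Matrix.add_mul]
  -- norm of S x
  set y : EuclideanSpace ℝ (Fin n) := Matrix.toEuclideanLin S x with hy
  have hyy : (inner ℝ y y : ℝ) ≤ 1 := by
    have h0 : (inner ℝ y y : ℝ) = inner ℝ x (Matrix.toEuclideanLin Pinv x) := by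
      rw [hy, herm_symm' hSh, ← toEuclideanLin_mul_apply', hSS]
    have h1 := psd_inner_nonneg hFactA x
    rw [map_sub] at h1
    simp only [LinearMap.sub_apply, inner_sub_right] at h1
    have h2 : Matrix.toEuclideanLin (1 : Matrix (Fin n) (Fin n) ℝ) x = x := by
      rw [toEuclideanLin_apply]
      simp
    rw [h2, hxx] at h1
    linarith [h0 ▸ h1]
  have hynorm : ‖y‖ * ‖y‖ ≤ 1 := by
    rwa [← real_inner_self_eq_norm_mul_norm]
  -- term 1
  have hterm1 : (inner ℝ x (Matrix.toEuclideanLin (S * B * S) x) : ℝ) ≤ c := by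
    have h1 := psd_inner_nonneg hFactB x
    rw [map_sub, _root_.map_smul] at h1
    simp only [LinearMap.sub_apply, LinearMap.smul_apply, inner_sub_right,
      inner_smul_right] at h1
    have h2 : Matrix.toEuclideanLin (1 : Matrix (Fin n) (Fin n) ℝ) x = x := by
      rw [toEuclideanLin_apply]; simp
    rw [h2, hxx] at h1
    linarith
  -- generic term bound
  have hterm : ∀ N : Matrix (Fin n) (Fin n) ℝ,
      (inner ℝ x (Matrix.toEuclideanLin (S * N * S) x) : ℝ) ≤ matSpectralNorm N := by
    intro N
    have h1 : (inner ℝ x (Matrix.toEuclideanLin (S * N * S) x) : ℝ)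
        = inner ℝ y (Matrix.toEuclideanLin N y) := by
      rw [toEuclideanLin_mul_apply', toEuclideanLin_mul_apply', ← herm_symm' hSh, hy]
    rw [h1]
    have h2 : (inner ℝ y (Matrix.toEuclideanLin N y) : ℝ)
        ≤ ‖y‖ * ‖Matrix.toEuclideanLin N y‖ := real_inner_le_norm _ _
    have h3 : ‖Matrix.toEuclideanLin N y‖ ≤ matSpectralNorm N * ‖y‖ := by
      unfold matSpectralNorm
      have h := (LinearMap.toContinuousLinearMap (Matrix.toEuclideanLin N)).le_opNorm y
      rwa [LinearMap.coe_toContinuousLinearMap'] at h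
    have h4 : 0 ≤ matSpectralNorm N := by unfold matSpectralNorm; exact norm_nonneg _
    calc (inner ℝ y (Matrix.toEuclideanLin N y) : ℝ)
        ≤ ‖y‖ * ‖Matrix.toEuclideanLin N y‖ := h2
      _ ≤ ‖y‖ * (matSpectralNorm N * ‖y‖) :=
          mul_le_mul_of_nonneg_left h3 (norm_nonneg y)
      _ = matSpectralNorm N * (‖y‖ * ‖y‖) := by ring
      _ ≤ matSpectralNorm N * 1 := mul_le_mul_of_nonneg_left hynorm h4
      _ = matSpectralNorm N := mul_one _
  -- combine
  have hsplit : (inner ℝ x (Matrix.toEuclideanLin M x) : ℝ)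
      = inner ℝ x (Matrix.toEuclideanLin (S * B * S) x)
        + inner ℝ x (Matrix.toEuclideanLin (S * E * S) x)
        + inner ℝ x (Matrix.toEuclideanLin (S * Err * S) x) := by
    rw [hMdec, map_add, map_add]
    simp only [LinearMap.add_apply, inner_add_right]
  rw [hsplit]
  have := hterm E
  have := hterm Err
  rw [hc] at hterm1
  linarith
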